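/- If α(1 ∧ β) > d, then there is no distribution P in the class P_Σ = P_Σ(α, C0, β, L, c0, r0, μ_min, μ_max, C) (for any choice of the parameters C0, c0, r0, μ_min, μ_max and compact C ⊂ R^d) such that the regression function η associated with P hits the level 1/2 at a point x0 lying in the interior of the support of P_X. -/

import Mathlib

open MeasureTheory Metric Set
open scoped ENNReal NNReal

noncomputable section

/-- Feature space: `ℝ^d` with the Euclidean norm. -/
abbrev Euc (d : ℕ) := EuclideanSpace ℝ (Fin d)

/-- A sample of size `n`: `n` points of `ℝ^d × {0,1}` (labels modelled by `Bool`). -/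
abbrev Sample (d n : ℕ) := Fin n → Euc d × Bool

/-- Joint law of `(X,Y)` determined by the marginal `PX` and the regression
function `η(x) = P(Y = 1 | X = x)`. -/
def jointLaw {d : ℕ} (PX : Measure (Euc d)) (η : Euc d → ℝ) : Measure (Euc d × Bool) :=
  PX.bind fun x =>
    ENNReal.ofReal (η x) • Measure.dirac (x, true) +
      ENNReal.ofReal (1 - η x) • Measure.dirac (x, false)

/-- Law `P^{⊗n}` of an i.i.d. sample of size `n`. -/
def sampleLaw {d : ℕ} (PX : Measure (Euc d)) (η : Euc d → ℝ) (n : ℕ) :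
    Measure (Sample d n) :=
  Measure.pi fun _ => jointLaw PX η

/-- Misclassification risk `R(f) = P(Y ≠ f(X))` of a decision rule `f`. -/
def risk {d : ℕ} (PX : Measure (Euc d)) (η : Euc d → ℝ) (f : Euc d → Bool) : ℝ :=
  ∫ x, (if f x then 1 - η x else η x) ∂PX

/-- The Bayes rule `f*(x) = 1{η(x) ≥ 1/2}`. -/
def bayes {d : ℕ} (η : Euc d → ℝ) : Euc d → Bool := fun x => decide ((1 : ℝ) / 2 ≤ η x)

/-- The plug-in rule `1{g ≥ 1/2}` associated with a function `g`. -/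
def plugin {d : ℕ} (g : Euc d → ℝ) : Euc d → Bool := fun x => decide ((1 : ℝ) / 2 ≤ g x)

/-- Margin (low noise) assumption MA(α, C0):
`P_X(0 < |η(X) − 1/2| ≤ t) ≤ C0 t^α` for all `t > 0`. -/
def Margin {d : ℕ} (PX : Measure (Euc d)) (η : Euc d → ℝ) (α C0 : ℝ) : Prop :=
  ∀ t : ℝ, 0 < t →
    PX {x | 0 < |η x - 1 / 2| ∧ |η x - 1 / 2| ≤ t} ≤ ENNReal.ofReal (C0 * t ^ α)

/-- Taylor polynomial of degree `N` of `g` at `x`, evaluated at `x'`. -/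
def taylorPoly {d : ℕ} (g : Euc d → ℝ) (N : ℕ) (x x' : Euc d) : ℝ :=
  ∑ k ∈ Finset.range (N + 1), (k.factorial : ℝ)⁻¹ * iteratedFDeriv ℝ k g x (fun _ => x' - x)

/-- The Hölder class `Σ(β, L, ℝ^d)`: `g` is `⌊β⌋` times continuously differentiable
(`⌊β⌋` = largest integer strictly less than `β`, i.e. `⌈β⌉₊ - 1` for `β > 0`) and its
Taylor polynomial of degree `⌊β⌋` approximates it to order `L‖x − x'‖^β`. -/
def HolderClass {d : ℕ} (β L : ℝ) (g : Euc d → ℝ) : Prop :=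
  ContDiff ℝ (⌈β⌉₊ - 1 : ℕ) g ∧
    ∀ x x' : Euc d, |g x' - taylorPoly g (⌈β⌉₊ - 1) x x'| ≤ L * ‖x' - x‖ ^ β

/-- `(c0, r0)`-regularity of a set `A`:
`λ[A ∩ B(x,r)] ≥ c0 λ[B(x,r)]` for all `0 < r ≤ r0` and `x ∈ A`. -/
def Regular {d : ℕ} (c0 r0 : ℝ) (A : Set (Euc d)) : Prop :=
  ∀ x ∈ A, ∀ r : ℝ, 0 < r → r ≤ r0 →
    ENNReal.ofReal c0 * volume (closedBall x r) ≤ volume (A ∩ closedBall x r)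

/-- Strong density assumption with parameters `(c0, r0, μmin, μmax, K)`. -/
def StrongDensity {d : ℕ} (PX : Measure (Euc d)) (c0 r0 μmin μmax : ℝ)
    (K : Set (Euc d)) : Prop :=
  ∃ A : Set (Euc d), IsCompact A ∧ A ⊆ K ∧ Regular c0 r0 A ∧
    ∃ μ : Euc d → ℝ, Measurable μ ∧ (∀ x ∈ A, μmin ≤ μ x ∧ μ x ≤ μmax) ∧
      (∀ x, x ∉ A → μ x = 0) ∧
      PX = volume.withDensity fun x => ENNReal.ofReal (μ x)

/-- Mild density assumption with parameters `(c0, r0, μmax, K)`. -/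
def MildDensity {d : ℕ} (PX : Measure (Euc d)) (c0 r0 μmax : ℝ)
    (K : Set (Euc d)) : Prop :=
  ∃ A : Set (Euc d), IsCompact A ∧ A ⊆ K ∧ Regular c0 r0 A ∧
    ∃ μ : Euc d → ℝ, Measurable μ ∧ (∀ x ∈ A, 0 ≤ μ x ∧ μ x ≤ μmax) ∧
      (∀ x, x ∉ A → μ x = 0) ∧
      PX = volume.withDensity fun x => ENNReal.ofReal (μ x)

/-- The class `P_Σ(α, C0, β, L, c0, r0, μmin, μmax, K)`, a distribution being encoded
by its marginal `PX` together with its regression function `η`. -/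
def MemPS {d : ℕ} (α C0 β L c0 r0 μmin μmax : ℝ) (K : Set (Euc d))
    (PX : Measure (Euc d)) (η : Euc d → ℝ) : Prop :=
  IsProbabilityMeasure PX ∧ Measurable η ∧ (∀ x, η x ∈ Icc (0 : ℝ) 1) ∧
    Margin PX η α C0 ∧ HolderClass β L η ∧ StrongDensity PX c0 r0 μmin μmax K

/-- Topological support of a measure on `ℝ^d`. -/
def msupport {d : ℕ} (PX : Measure (Euc d)) : Set (Euc d) :=
  {x | ∀ r : ℝ, 0 < r → 0 < PX (ball x r)}

/-- `f` hits the level `a` at `x0`. -/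
def Hits {d : ℕ} (f : Euc d → ℝ) (a : ℝ) (x0 : Euc d) : Prop :=
  f x0 = a ∧ ∀ r : ℝ, 0 < r → ∃ x ∈ closedBall x0 r, f x ≠ a

/-- `f` crosses the level `a` at `x0`. -/
def Crosses {d : ℕ} (f : Euc d → ℝ) (a : ℝ) (x0 : Euc d) : Prop :=
  ∀ r : ℝ, 0 < r → (∃ x ∈ closedBall x0 r, f x < a) ∧ ∃ x ∈ closedBall x0 r, a < f x

/-- Expected excess risk `E[R(f̂_n)] − R(f*)` of a plug-in classifier built from the
estimator `hatη` of the regression function. -/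
def expExcess {d : ℕ} (PX : Measure (Euc d)) (η : Euc d → ℝ) {n : ℕ}
    (hatη : Sample d n → Euc d → ℝ) : ℝ :=
  (∫ ω, risk PX η (plugin (hatη ω)) ∂sampleLaw PX η n) - risk PX η (bayes η)

/-- Expected excess risk `E[R(f̂_n)] − R(f*)` of a (general) classifier. -/
def expExcessRule {d : ℕ} (PX : Measure (Euc d)) (η : Euc d → ℝ) {n : ℕ}
    (fhat : Sample d n → Euc d → Bool) : ℝ :=
  (∫ ω, risk PX η (fhat ω) ∂sampleLaw PX η n) - risk PX η (bayes η)

/-- Empirical misclassification risk of the plug-in rule `1{g ≥ 1/2}` on a sample. -/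
def empRisk {d n : ℕ} (ω : Sample d n) (g : Euc d → ℝ) : ℝ :=
  (n : ℝ)⁻¹ * ∑ i : Fin n, if plugin g (ω i).1 ≠ (ω i).2 then (1 : ℝ) else 0

/-- Local Hölder-type continuity with exponent `min 1 β` near a point. -/
lemma holder_local {d : ℕ} {β L : ℝ} (hβ : 0 < β) (hL : 0 < L) {η : Euc d → ℝ}
    (hη : HolderClass β L η) (x0 : Euc d) :
    ∃ L' δ2 : ℝ, 0 < L' ∧ 0 < δ2 ∧ ∀ x ∈ closedBall x0 δ2, ∀ y ∈ closedBall x0 δ2,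
      |η y - η x| ≤ L' * dist y x ^ (min 1 β) := by
  rcases le_or_gt β 1 with hb1 | hb1
  · refine ⟨L, 1, hL, one_pos, fun x _ y _ => ?_⟩
    have hceil : ⌈β⌉₊ = 1 := by
      have h1 : ⌈β⌉₊ ≤ 1 := Nat.ceil_le.mpr (by simpa using hb1)
      have h2 : 1 ≤ ⌈β⌉₊ := Nat.one_le_ceil_iff.mpr hβ
      omega
    have := hη.2 x y
    rw [hceil] at this
    have htp : taylorPoly η 0 x y = η x := by
      simp [taylorPoly, iteratedFDeriv_zero_apply]
    rw [show (1:ℕ) - 1 = 0 from rfl, htp] at this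
    have hmin : min 1 β = β := min_eq_right hb1
    rw [hmin]
    simpa [dist_eq_norm] using this
  · -- β > 1 : η is C¹, hence locally Lipschitz
    have hmin : min 1 β = 1 := min_eq_left hb1.le
    have h1le : (1:ℕ) ≤ ⌈β⌉₊ - 1 := by
      have h2c : 1 < ⌈β⌉₊ := by
        rw [Nat.lt_ceil]; exact_mod_cast hb1
      omega
    have hc1 : ContDiff ℝ 1 η := hη.1.of_le (by exact_mod_cast h1le)
    obtain ⟨K, s, hs, hlip⟩ := (hc1.contDiffAt).exists_lipschitzOnWith
    obtain ⟨ρ, hρ, hball⟩ := Metric.mem_nhds_iff.mp hs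
    refine ⟨(K:ℝ) + 1, ρ/2, by positivity, by positivity, fun x hx y hy => ?_⟩
    have hxs : x ∈ s := hball (lt_of_le_of_lt (mem_closedBall.mp hx) (by linarith))
    have hys : y ∈ s := hball (lt_of_le_of_lt (mem_closedBall.mp hy) (by linarith))
    have := hlip.dist_le_mul y hys x hxs
    rw [hmin, Real.rpow_one]
    have habs : |η y - η x| ≤ (K:ℝ) * dist y x := by simpa [Real.dist_eq] using this
    calc |η y - η x| ≤ (K:ℝ) * dist y x := habs
      _ ≤ ((K:ℝ) + 1) * dist y x :=
          mul_le_mul_of_nonneg_right (by linarith) dist_nonneg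

/-- Proposition 3.4, first item. If `α(1 ∧ β) > d`, no distribution of
the class `P_Σ` (whatever the parameters `C0, c0, r0, μmin, μmax` and the compact `K`)
has a regression function hitting `1/2` in the interior of the support of `P_X`. -/

theorem stmt3 (d : ℕ) (hd : 1 ≤ d) (α β L : ℝ) (hα : 0 < α) (hβ : 0 < β) (hL : 0 < L)
    (h : (d : ℝ) < α * min 1 β) :
    ¬ ∃ (C0 c0 r0 μmin μmax : ℝ) (K : Set (Euc d)) (PX : Measure (Euc d))
        (η : Euc d → ℝ) (x0 : Euc d),
        0 < C0 ∧ 0 < c0 ∧ 0 < r0 ∧ 0 < μmin ∧ μmin ≤ μmax ∧ IsCompact K ∧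
        MemPS α C0 β L c0 r0 μmin μmax K PX η ∧
        x0 ∈ interior (msupport PX) ∧ Hits η (1 / 2) x0 := by
  set γ : ℝ := min 1 β with hγdef
  have hγ : 0 < γ := lt_min one_pos hβ
  have hγ1 : γ ≤ 1 := min_le_left _ _
  rintro ⟨C0, c0, r0, μmin, μmax, K, PX, η, x0, hC0, hc0, hr0, hμmin, hμm, hKc,
    ⟨hprob, hηmeas, hrange, hmargin, hholder, A, hAcomp, hAK, hreg, μ, hμmeas, hμb, hμ0, hPX⟩,
    hx0int, hη0, hhit⟩
  -- local Hölder continuity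
  obtain ⟨L', δ2, hL', hδ2, hHol⟩ := holder_local hβ hL hholder x0
  -- neighbourhood of support
  obtain ⟨δ1', hδ1', hball1⟩ := Metric.mem_nhds_iff.mp (mem_interior_iff_mem_nhds.mp hx0int)
  set δ1 : ℝ := δ1' / 2 with hδ1def
  have hδ1 : 0 < δ1 := by positivity
  have hsupp : ∀ x ∈ closedBall x0 δ1, ∀ s : ℝ, 0 < s → 0 < PX (ball x s) := by
    intro x hx s hs
    have : x ∈ msupport PX := hball1 (lt_of_le_of_lt (mem_closedBall.mp hx) (by simp [hδ1def]; linarith))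
    exact this s hs
  -- points of A near support points
  have hAnear : ∀ x ∈ closedBall x0 δ1, ∀ s : ℝ, 0 < s → ∃ a ∈ A, dist a x < s := by
    intro x hx s hs
    by_contra hcon
    push_neg at hcon
    have hz : ∀ y ∈ ball x s, μ y = 0 := by
      intro y hy
      have : y ∉ A := fun hyA => absurd (mem_ball.mp hy) (not_lt.mpr (hcon y hyA))
      exact hμ0 y this
    have : PX (ball x s) = 0 := by
      rw [hPX, withDensity_apply _ measurableSet_ball]
      refine le_antisymm ?_ zero_le
      calc ∫⁻ y in ball x s, ENNReal.ofReal (μ y) ∂volume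
          ≤ ∫⁻ _ in ball x s, 0 ∂volume :=
            setLIntegral_mono measurable_const (fun y hy => by simp [hz y hy])
        _ = 0 := by simp
    exact absurd this (hsupp x hx s hs).ne'
  have hAmeas : MeasurableSet A := hAcomp.isClosed.measurableSet
  -- volume of unit ball
  set v : ℝ := (volume (closedBall (0 : Euc d) 1)).toReal with hvdef
  have hVlt : volume (closedBall (0 : Euc d) 1) < ⊤ := measure_closedBall_lt_top
  have hv : 0 < v :=
    ENNReal.toReal_pos (measure_closedBall_pos _ _ one_pos).ne' hVlt.ne
  -- constants
  set dγ : ℝ := (d : ℝ) / γ with hdγdef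
  have hdγ : 0 ≤ dγ := by positivity
  set e : ℝ := α - dγ with hedef
  have he : 0 < e := by
    have : dγ < α := by
      rw [hdγdef, div_lt_iff₀ hγ]
      exact h
    simpa [hedef] using sub_pos.mpr this
  set K1 : ℝ := μmin * c0 * v / (4 * L') ^ dγ with hK1def
  have h4L : (0:ℝ) < 4 * L' := by positivity
  have hK1 : 0 < K1 := by
    have : (0:ℝ) < (4 * L') ^ dγ := Real.rpow_pos_of_pos h4L _
    positivity
  set K2 : ℝ := C0 * 2 ^ α with hK2def
  have hK2 : 0 < K2 := by
    have : (0:ℝ) < (2:ℝ) ^ α := Real.rpow_pos_of_pos two_pos _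
    positivity
  set δm : ℝ := min δ1 δ2 with hδmdef
  have hδm : 0 < δm := lt_min hδ1 hδ2
  set m : ℝ := min r0 (δm / 4) with hmdef
  have hm : 0 < m := lt_min hr0 (by positivity)
  -- choice of ε
  set c : ℝ := (K1 / (2 * K2)) ^ e⁻¹ with hcdef
  have hc : 0 < c := Real.rpow_pos_of_pos (by positivity) _
  set ε : ℝ := min (min 1 c) (4 * L' * m ^ γ) with hεdef
  have hmγ : (0:ℝ) < m ^ γ := Real.rpow_pos_of_pos hm _
  have hε : 0 < ε := lt_min (lt_min one_pos hc) (by positivity)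
  -- find x near x0 with 0 < |η x - 1/2| < ε
  have hcont : Continuous η := (hholder.1).continuous
  have hcontat : ContinuousAt η x0 := hcont.continuousAt
  obtain ⟨δc, hδc, hδcb⟩ := Metric.continuousAt_iff.mp hcontat ε hε
  set δ' : ℝ := min δc δm with hδ'def
  have hδ' : 0 < δ' := lt_min hδc hδm
  obtain ⟨x, hxball, hxne⟩ := hhit (δ' / 2) (by positivity)
  have hηx0 : η x0 = 1 / 2 := hη0
  set t : ℝ := |η x - 1 / 2| with htdef
  have ht : 0 < t := abs_pos.mpr (sub_ne_zero.mpr hxne)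
  have hxδ' : dist x x0 ≤ δ' / 2 := mem_closedBall.mp hxball
  have htε : t < ε := by
    have : dist x x0 < δc := lt_of_le_of_lt hxδ' (by have := min_le_left δc δm; linarith)
    have := hδcb this
    rw [Real.dist_eq, hηx0] at this
    simpa [htdef] using this
  have hxδm : x ∈ closedBall x0 δm := by
    rw [mem_closedBall]
    have : δ' ≤ δm := min_le_right _ _
    linarith
  have hxδ1 : x ∈ closedBall x0 δ1 := by
    rw [mem_closedBall]; rw [mem_closedBall] at hxδm
    exact le_trans hxδm (min_le_left _ _)
  have hxδ2 : x ∈ closedBall x0 δ2 := by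
    rw [mem_closedBall]; rw [mem_closedBall] at hxδm
    exact le_trans hxδm (min_le_right _ _)
  -- radius r
  set r : ℝ := (t / (4 * L')) ^ (γ⁻¹) with hrdef
  have hrpos : 0 < r := Real.rpow_pos_of_pos (by positivity) _
  have hrγ : r ^ γ = t / (4 * L') := by
    rw [hrdef, ← Real.rpow_mul (by positivity), inv_mul_cancel₀ hγ.ne', Real.rpow_one]
  -- r is small : r ≤ m = min r0 (δm/4)
  have hrm : r ≤ m := by
    have h1 : t / (4 * L') ≤ m ^ γ := by
      rw [div_le_iff₀ h4L]
      have h2 : ε ≤ 4 * L' * m ^ γ := min_le_right _ _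
      calc t ≤ 4 * L' * m ^ γ := by linarith
        _ = m ^ γ * (4 * L') := by ring
    calc r = (t / (4 * L')) ^ γ⁻¹ := hrdef
      _ ≤ (m ^ γ) ^ γ⁻¹ := Real.rpow_le_rpow (by positivity) h1 (by positivity)
      _ = m := by rw [← Real.rpow_mul hm.le, mul_inv_cancel₀ hγ.ne', Real.rpow_one]
  have hrr0 : r ≤ r0 := le_trans hrm (min_le_left _ _)
  have hrδm : r ≤ δm / 4 := le_trans hrm (min_le_right _ _)
  -- pick a ∈ A close to x
  set ρ : ℝ := min (δm / 4) r with hρdef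
  have hρ : 0 < ρ := lt_min (by positivity) hrpos
  obtain ⟨a, haA, hax⟩ := hAnear x hxδ1 ρ hρ
  have haxr : dist a x ≤ r := le_trans hax.le (min_le_right _ _)
  have haxδ : dist a x ≤ δm / 4 := le_trans hax.le (min_le_left _ _)
  have haδm : a ∈ closedBall x0 δm := by
    rw [mem_closedBall]
    calc dist a x0 ≤ dist a x + dist x x0 := dist_triangle _ _ _
      _ ≤ δm / 4 + δ' / 2 := add_le_add haxδ hxδ'
      _ ≤ δm := by have : δ' ≤ δm := min_le_right _ _; linarith
  have haδ2 : a ∈ closedBall x0 δ2 := by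
    rw [mem_closedBall]; rw [mem_closedBall] at haδm
    exact le_trans haδm (min_le_right _ _)
  -- Hölder control of η on closedBall a r
  have hηax : |η a - η x| ≤ t / 4 := by
    have := hHol x hxδ2 a haδ2
    have h2 : L' * dist a x ^ γ ≤ L' * r ^ γ :=
      mul_le_mul_of_nonneg_left (Real.rpow_le_rpow dist_nonneg haxr hγ.le) hL'.le
    rw [hrγ] at h2
    calc |η a - η x| ≤ L' * dist a x ^ γ := this
      _ ≤ L' * (t / (4 * L')) := h2
      _ = t / 4 := by field_simp
  have hballsub : ∀ y ∈ closedBall a r, y ∈ closedBall x0 δ2 := by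
    intro y hy
    rw [mem_closedBall]
    have : dist y x0 ≤ dist y a + dist a x + dist x x0 := dist_triangle4 _ _ _ _
    have h1 : dist y a ≤ r := mem_closedBall.mp hy
    have h2 : δ' ≤ δm := min_le_right _ _
    have h3 : δm ≤ δ2 := min_le_right _ _
    linarith
  have hηy : ∀ y ∈ closedBall a r, 0 < |η y - 1/2| ∧ |η y - 1/2| ≤ 2 * t := by
    intro y hy
    have hyd2 : y ∈ closedBall x0 δ2 := hballsub y hy
    have h1 : |η y - η a| ≤ t / 4 := by
      have := hHol a haδ2 y hyd2
      have h2 : L' * dist y a ^ γ ≤ L' * r ^ γ :=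
        mul_le_mul_of_nonneg_left
          (Real.rpow_le_rpow dist_nonneg (mem_closedBall.mp hy) hγ.le) hL'.le
      rw [hrγ] at h2
      calc |η y - η a| ≤ L' * dist y a ^ γ := this
        _ ≤ L' * (t / (4 * L')) := h2
        _ = t / 4 := by field_simp
    have habs1 := abs_sub_abs_le_abs_sub (η y - 1/2) (η x - 1/2)
    have habs2 := abs_sub_abs_le_abs_sub (η x - 1/2) (η y - 1/2)
    have h3 : |η y - 1/2 - (η x - 1/2)| ≤ t / 2 := by
      have : η y - 1/2 - (η x - 1/2) = (η y - η a) + (η a - η x) := by ring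
      rw [this]
      calc |(η y - η a) + (η a - η x)| ≤ |η y - η a| + |η a - η x| := abs_add_le _ _
        _ ≤ t / 4 + t / 4 := add_le_add h1 hηax
        _ = t / 2 := by ring
    have h4 : |η x - 1/2 - (η y - 1/2)| ≤ t / 2 := by
      rw [show η x - 1/2 - (η y - 1/2) = -(η y - 1/2 - (η x - 1/2)) by ring, abs_neg]
      exact h3
    constructor
    · have : t - |η y - 1/2| ≤ t / 2 := le_trans habs2 h4
      linarith
    · have : |η y - 1/2| - t ≤ t / 2 := le_trans habs1 h3
      linarith
  -- measure comparison
  have hAint : MeasurableSet (A ∩ closedBall a r) := hAmeas.inter measurableSet_closedBall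
  have hchain : ENNReal.ofReal (μmin * (c0 * (r ^ d * v))) ≤ ENNReal.ofReal (C0 * (2*t) ^ α) := by
    have hvol : volume (closedBall a r) = ENNReal.ofReal (r ^ d * v) := by
      rw [Measure.addHaar_closedBall' _ _ hrpos.le, finrank_euclideanSpace_fin,
        ← ENNReal.ofReal_toReal hVlt.ne, ← hvdef, ← ENNReal.ofReal_mul (by positivity)]
    calc ENNReal.ofReal (μmin * (c0 * (r ^ d * v)))
        = ENNReal.ofReal μmin * (ENNReal.ofReal c0 * volume (closedBall a r)) := by
          rw [hvol, ← ENNReal.ofReal_mul hc0.le, ← ENNReal.ofReal_mul hμmin.le]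
      _ ≤ ENNReal.ofReal μmin * volume (A ∩ closedBall a r) :=
          by gcongr; exact hreg a haA r hrpos hrr0
      _ ≤ ∫⁻ y in A ∩ closedBall a r, ENNReal.ofReal (μ y) ∂volume := by
          rw [← setLIntegral_const (A ∩ closedBall a r) (ENNReal.ofReal μmin)]
          exact setLIntegral_mono hμmeas.ennreal_ofReal
            (fun y hy => ENNReal.ofReal_le_ofReal (hμb y hy.1).1)
      _ = PX (A ∩ closedBall a r) := by rw [hPX, withDensity_apply _ hAint]
      _ ≤ PX (closedBall a r) := by
          rw [hPX]; exact measure_mono inter_subset_right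
      _ ≤ PX {y | 0 < |η y - 1/2| ∧ |η y - 1/2| ≤ 2*t} :=
          measure_mono (fun y hy => hηy y hy)
      _ ≤ ENNReal.ofReal (C0 * (2*t) ^ α) := hmargin (2*t) (by linarith)
  have hreal : μmin * (c0 * (r ^ d * v)) ≤ C0 * (2*t) ^ α :=
    (ENNReal.ofReal_le_ofReal_iff (by positivity)).mp hchain
  -- rewrite powers
  have hrd : (r : ℝ) ^ d = t ^ dγ / (4 * L') ^ dγ := by
    rw [← Real.rpow_natCast r d, hrdef, ← Real.rpow_mul (by positivity)]
    rw [show γ⁻¹ * (d : ℝ) = dγ by rw [hdγdef]; ring]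
    exact Real.div_rpow ht.le h4L.le dγ
  have h2t : (2*t) ^ α = 2 ^ α * t ^ α := Real.mul_rpow (by norm_num) ht.le
  have htα : t ^ α = t ^ dγ * t ^ e := by
    rw [← Real.rpow_add ht, show dγ + e = α by rw [hedef]; ring]
  have htdγ : (0:ℝ) < t ^ dγ := Real.rpow_pos_of_pos ht _
  have hkey : K1 ≤ K2 * t ^ e := by
    have h1 : K1 * t ^ dγ ≤ K2 * t ^ e * t ^ dγ := by
      have hthis : μmin * (c0 * (t ^ dγ / (4 * L') ^ dγ * v)) ≤ C0 * (2 ^ α * (t ^ dγ * t ^ e)) := by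
        rw [← htα, ← h2t, ← hrd]; exact hreal
      have e1 : K1 * t ^ dγ = μmin * (c0 * (t ^ dγ / (4 * L') ^ dγ * v)) := by
        rw [hK1def]; ring
      have e2 : K2 * t ^ e * t ^ dγ = C0 * (2 ^ α * (t ^ dγ * t ^ e)) := by
        rw [hK2def]; ring
      rw [e1, e2]; exact hthis
    exact le_of_mul_le_mul_right h1 htdγ
  -- and the contradiction : t^e is too small
  have htec : t ^ e ≤ K1 / (2 * K2) := by
    have h1 : t ≤ c := le_trans htε.le (le_trans (min_le_left _ _) (min_le_right _ _))
    calc t ^ e ≤ c ^ e := Real.rpow_le_rpow ht.le h1 he.le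
      _ = K1 / (2 * K2) := by
          rw [hcdef, ← Real.rpow_mul (by positivity), inv_mul_cancel₀ he.ne', Real.rpow_one]
  have : K1 ≤ K1 / 2 := by
    calc K1 ≤ K2 * t ^ e := hkey
      _ ≤ K2 * (K1 / (2 * K2)) := mul_le_mul_of_nonneg_left htec hK2.le
      _ = K1 / 2 := by
          field_simp [hK2.ne']
  linarith



end
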